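/- The quantity V(π/2) / (2π²), where V(π/2) = 2π ∫₀^{π/2} ∫_{−π/2}^{π/2} τ · sin(τ cos v) dv dτ, satisfies 0.6963 < V(π/2) / (2π²) < 0.6964. (This is the density δ(R₃, K₃) ≈ 0.69634983 of the multiply transitive packing with R₃ = π/2 and kernel point K = A₂ in equation (2.11) of the paper, the Dirichlet–Voronoi cell having volume 2π².) -/

import Mathlib

set_option maxHeartbeats 1000000
open Real intervalIntegral


private lemma nonneg_of_derivPos (f f' : ℝ → ℝ) (hd : ∀ y, HasDerivAt f (f' y) y)
    (h0 : f 0 = 0) (hp : ∀ y, 0 ≤ y → 0 ≤ f' y) {x : ℝ} (hx : 0 ≤ x) : 0 ≤ f x := by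
  have hm : MonotoneOn f (Set.Ici (0:ℝ)) := by
    apply monotoneOn_of_deriv_nonneg (convex_Ici 0)
      (fun y _ => (hd y).continuousAt.continuousWithinAt)
      (fun y _ => (hd y).differentiableAt.differentiableWithinAt)
    intro y hy
    rw [(hd y).deriv]
    exact hp y (le_of_lt (by simpa using hy))
  have := hm (Set.self_mem_Ici) (Set.mem_Ici.2 hx) hx
  rwa [h0] at this

private lemma sin_ge_s3 {x : ℝ} (hx : 0 ≤ x) : x - x^3/6 ≤ Real.sin x := by
  have h := nonneg_of_derivPos (fun y => Real.sin y - (y - y^3/6))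
    (fun y => Real.cos y - (1 - y^2/2)) (fun y => ?_) (by simp) (fun y hy => ?_) hx
  · linarith
  · have h1 := ((Real.hasDerivAt_sin y).sub ((hasDerivAt_id y).sub ((hasDerivAt_pow 3 y).div_const 6)))
    refine h1.congr_deriv ?_; push_cast; ring
  · have := Real.one_sub_sq_div_two_le_cos (x := y); linarith

private lemma cos_le_c4 {x : ℝ} (hx : 0 ≤ x) : Real.cos x ≤ 1 - x^2/2 + x^4/24 := by
  have h := nonneg_of_derivPos (fun y => (1 - y^2/2 + y^4/24) - Real.cos y)
    (fun y => (-(y) + y^3/6) + Real.sin y) (fun y => ?_) (by simp) (fun y hy => ?_) hx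
  · linarith
  · have h1 := (((hasDerivAt_pow 2 y).div_const 2 |>.const_sub 1).add ((hasDerivAt_pow 4 y).div_const 24)).sub (Real.hasDerivAt_cos y)
    refine h1.congr_deriv ?_; push_cast; ring
  · have := sin_ge_s3 hy; linarith

private lemma sin_le_s5 {x : ℝ} (hx : 0 ≤ x) : Real.sin x ≤ x - x^3/6 + x^5/120 := by
  have h := nonneg_of_derivPos (fun y => (y - y^3/6 + y^5/120) - Real.sin y)
    (fun y => (1 - y^2/2 + y^4/24) - Real.cos y) (fun y => ?_) (by simp) (fun y hy => ?_) hx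
  · linarith
  · have h1 := (((hasDerivAt_id y).sub ((hasDerivAt_pow 3 y).div_const 6)).add ((hasDerivAt_pow 5 y).div_const 120)).sub (Real.hasDerivAt_sin y)
    refine h1.congr_deriv ?_; push_cast; ring
  · have := cos_le_c4 hy; linarith

private lemma cos_ge_c6 {x : ℝ} (hx : 0 ≤ x) : 1 - x^2/2 + x^4/24 - x^6/720 ≤ Real.cos x := by
  have h := nonneg_of_derivPos (fun y => Real.cos y - (1 - y^2/2 + y^4/24 - y^6/720))
    (fun y => (y - y^3/6 + y^5/120) - Real.sin y) (fun y => ?_) (by simp) (fun y hy => ?_) hx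
  · linarith
  · have h1 := (Real.hasDerivAt_cos y).sub ((((hasDerivAt_pow 2 y).div_const 2 |>.const_sub 1).add ((hasDerivAt_pow 4 y).div_const 24)).sub ((hasDerivAt_pow 6 y).div_const 720))
    refine h1.congr_deriv ?_; push_cast; ring
  · have := sin_le_s5 hy; linarith

private lemma sin_ge_s7 {x : ℝ} (hx : 0 ≤ x) : x - x^3/6 + x^5/120 - x^7/5040 ≤ Real.sin x := by
  have h := nonneg_of_derivPos (fun y => Real.sin y - (y - y^3/6 + y^5/120 - y^7/5040))
    (fun y => Real.cos y - (1 - y^2/2 + y^4/24 - y^6/720)) (fun y => ?_) (by simp) (fun y hy => ?_) hx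
  · linarith
  · have h1 := (Real.hasDerivAt_sin y).sub ((((hasDerivAt_id y).sub ((hasDerivAt_pow 3 y).div_const 6)).add ((hasDerivAt_pow 5 y).div_const 120)).sub ((hasDerivAt_pow 7 y).div_const 5040))
    refine h1.congr_deriv ?_; push_cast; ring
  · have := cos_ge_c6 hy; linarith

private lemma cos_le_c8 {x : ℝ} (hx : 0 ≤ x) : Real.cos x ≤ 1 - x^2/2 + x^4/24 - x^6/720 + x^8/40320 := by
  have h := nonneg_of_derivPos (fun y => (1 - y^2/2 + y^4/24 - y^6/720 + y^8/40320) - Real.cos y)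
    (fun y => -(y - y^3/6 + y^5/120 - y^7/5040) + Real.sin y) (fun y => ?_) (by simp) (fun y hy => ?_) hx
  · linarith
  · have h1 := (((((hasDerivAt_pow 2 y).div_const 2 |>.const_sub 1).add ((hasDerivAt_pow 4 y).div_const 24)).sub ((hasDerivAt_pow 6 y).div_const 720)).add ((hasDerivAt_pow 8 y).div_const 40320)).sub (Real.hasDerivAt_cos y)
    refine h1.congr_deriv ?_; push_cast; ring
  · have := sin_ge_s7 hy; linarith

private lemma sin_le_s9 {x : ℝ} (hx : 0 ≤ x) :
    Real.sin x ≤ x - x^3/6 + x^5/120 - x^7/5040 + x^9/362880 := by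
  have h := nonneg_of_derivPos (fun y => (y - y^3/6 + y^5/120 - y^7/5040 + y^9/362880) - Real.sin y)
    (fun y => (1 - y^2/2 + y^4/24 - y^6/720 + y^8/40320) - Real.cos y) (fun y => ?_) (by simp) (fun y hy => ?_) hx
  · linarith
  · have h1 := (((((hasDerivAt_id y).sub ((hasDerivAt_pow 3 y).div_const 6)).add ((hasDerivAt_pow 5 y).div_const 120)).sub ((hasDerivAt_pow 7 y).div_const 5040)).add ((hasDerivAt_pow 9 y).div_const 362880)).sub (Real.hasDerivAt_sin y)
    refine h1.congr_deriv ?_; push_cast; ring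
  · have := cos_le_c8 hy; linarith

private lemma inner_subst (G : ℝ → ℝ) (hG : Continuous G) :
    ∫ v in (-(π/2))..(π/2), Real.cos v * G (Real.sin v) = ∫ u in (-1:ℝ)..1, G u := by
  have h := intervalIntegral.integral_comp_smul_deriv (a := -(π/2)) (b := π/2)
    (f := Real.sin) (f' := Real.cos) (g := G)
    (fun x _ => Real.hasDerivAt_sin x) Real.continuousOn_cos hG
  simpa [smul_eq_mul, Real.sin_pi_div_two, Function.comp] using h

private lemma inner_lo (τ : ℝ) :
    (∫ v in (-(π/2))..(π/2),
      (τ * ((τ*Real.cos v) - (τ*Real.cos v)^3/6 + (τ*Real.cos v)^5/120 - (τ*Real.cos v)^7/5040)))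
    = 2*τ^2 - 2/9*τ^4 + 2/225*τ^6 - 2/11025*τ^8 := by
  have h1 : (∫ v in (-(π/2))..(π/2),
      (τ * ((τ*Real.cos v) - (τ*Real.cos v)^3/6 + (τ*Real.cos v)^5/120 - (τ*Real.cos v)^7/5040)))
      = ∫ v in (-(π/2))..(π/2), Real.cos v *
        (τ^2 - τ^4/6*(1-Real.sin v^2) + τ^6/120*(1-Real.sin v^2)^2 - τ^8/5040*(1-Real.sin v^2)^3) := by
    apply intervalIntegral.integral_congr
    intro v _
    simp only [← Real.cos_sq']
    ring
  have h2 := inner_subst (fun u => τ^2 - τ^4/6*(1-u^2) + τ^6/120*(1-u^2)^2 - τ^8/5040*(1-u^2)^3)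
    (by fun_prop)
  rw [h1, h2]
  have hF : ∀ u ∈ Set.uIcc (-1:ℝ) 1, HasDerivAt
      (fun u : ℝ => τ^2*u - τ^4/6*(u-u^3/3) + τ^6/120*(u-2/3*u^3+u^5/5) - τ^8/5040*(u-u^3+3/5*u^5-u^7/7))
      (τ^2 - τ^4/6*(1-u^2) + τ^6/120*(1-u^2)^2 - τ^8/5040*(1-u^2)^3) u := by
    intro u _
    have hu := hasDerivAt_id u
    have h3 := hasDerivAt_pow 3 u
    have h5 := hasDerivAt_pow 5 u
    have h7 := hasDerivAt_pow 7 u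
    have hA := hu.sub (h3.div_const 3)
    have hB := (hu.sub (HasDerivAt.const_mul (2/3 : ℝ) h3)).add (h5.div_const 5)
    have hC := ((hu.sub h3).add (HasDerivAt.const_mul (3/5 : ℝ) h5)).sub (h7.div_const 7)
    have htot := (((HasDerivAt.const_mul (τ^2) hu).sub (HasDerivAt.const_mul (τ^4/6) hA)).add
      (HasDerivAt.const_mul (τ^6/120) hB)).sub (HasDerivAt.const_mul (τ^8/5040) hC)
    refine htot.congr_deriv ?_
    push_cast
    ring
  rw [intervalIntegral.integral_eq_sub_of_hasDerivAt hF (((by fun_prop : Continuous fun u : ℝ => τ^2 - τ^4/6*(1-u^2) + τ^6/120*(1-u^2)^2 - τ^8/5040*(1-u^2)^3).intervalIntegrable _ _))]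
  norm_num
  ring

private lemma inner_hi (τ : ℝ) :
    (∫ v in (-(π/2))..(π/2),
      (τ * ((τ*Real.cos v) - (τ*Real.cos v)^3/6 + (τ*Real.cos v)^5/120 - (τ*Real.cos v)^7/5040
        + (τ*Real.cos v)^9/362880)))
    = 2*τ^2 - 2/9*τ^4 + 2/225*τ^6 - 2/11025*τ^8 + 2/893025*τ^10 := by
  have h1 : (∫ v in (-(π/2))..(π/2),
      (τ * ((τ*Real.cos v) - (τ*Real.cos v)^3/6 + (τ*Real.cos v)^5/120 - (τ*Real.cos v)^7/5040
        + (τ*Real.cos v)^9/362880)))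
      = ∫ v in (-(π/2))..(π/2), Real.cos v *
        (τ^2 - τ^4/6*(1-Real.sin v^2) + τ^6/120*(1-Real.sin v^2)^2 - τ^8/5040*(1-Real.sin v^2)^3
          + τ^10/362880*(1-Real.sin v^2)^4) := by
    apply intervalIntegral.integral_congr
    intro v _
    simp only [← Real.cos_sq']
    ring
  have h2 := inner_subst (fun u => τ^2 - τ^4/6*(1-u^2) + τ^6/120*(1-u^2)^2 - τ^8/5040*(1-u^2)^3
      + τ^10/362880*(1-u^2)^4) (by fun_prop)
  rw [h1, h2]
  have hF : ∀ u ∈ Set.uIcc (-1:ℝ) 1, HasDerivAt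
      (fun u : ℝ => τ^2*u - τ^4/6*(u-u^3/3) + τ^6/120*(u-2/3*u^3+u^5/5)
        - τ^8/5040*(u-u^3+3/5*u^5-u^7/7) + τ^10/362880*(u-4/3*u^3+6/5*u^5-4/7*u^7+u^9/9))
      (τ^2 - τ^4/6*(1-u^2) + τ^6/120*(1-u^2)^2 - τ^8/5040*(1-u^2)^3 + τ^10/362880*(1-u^2)^4) u := by
    intro u _
    have hu := hasDerivAt_id u
    have h3 := hasDerivAt_pow 3 u
    have h5 := hasDerivAt_pow 5 u
    have h7 := hasDerivAt_pow 7 u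
    have h9 := hasDerivAt_pow 9 u
    have hA := hu.sub (h3.div_const 3)
    have hB := (hu.sub (HasDerivAt.const_mul (2/3 : ℝ) h3)).add (h5.div_const 5)
    have hC := ((hu.sub h3).add (HasDerivAt.const_mul (3/5 : ℝ) h5)).sub (h7.div_const 7)
    have hD := (((hu.sub (HasDerivAt.const_mul (4/3 : ℝ) h3)).add
      (HasDerivAt.const_mul (6/5 : ℝ) h5)).sub (HasDerivAt.const_mul (4/7 : ℝ) h7)).add
      (h9.div_const 9)
    have htot := ((((HasDerivAt.const_mul (τ^2) hu).sub (HasDerivAt.const_mul (τ^4/6) hA)).add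
      (HasDerivAt.const_mul (τ^6/120) hB)).sub (HasDerivAt.const_mul (τ^8/5040) hC)).add
      (HasDerivAt.const_mul (τ^10/362880) hD)
    refine htot.congr_deriv ?_
    push_cast
    ring
  rw [intervalIntegral.integral_eq_sub_of_hasDerivAt hF
    ((by fun_prop : Continuous fun u : ℝ => τ^2 - τ^4/6*(1-u^2) + τ^6/120*(1-u^2)^2
      - τ^8/5040*(1-u^2)^3 + τ^10/362880*(1-u^2)^4).intervalIntegrable _ _)]
  norm_num
  ring

private lemma outer_lo :
    (∫ τ in (0:ℝ)..(π/2), (2*τ^2 - 2/9*τ^4 + 2/225*τ^6 - 2/11025*τ^8))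
    = π^3/12 - π^5/720 + π^7/100800 - π^9/25401600 := by
  have hF : ∀ τ ∈ Set.uIcc (0:ℝ) (π/2), HasDerivAt
      (fun τ : ℝ => 2/3*τ^3 - 2/45*τ^5 + 2/1575*τ^7 - 2/99225*τ^9)
      (2*τ^2 - 2/9*τ^4 + 2/225*τ^6 - 2/11025*τ^8) τ := by
    intro τ _
    have h3 := hasDerivAt_pow 3 τ
    have h5 := hasDerivAt_pow 5 τ
    have h7 := hasDerivAt_pow 7 τ
    have h9 := hasDerivAt_pow 9 τ
    have htot := (((HasDerivAt.const_mul (2/3 : ℝ) h3).sub (HasDerivAt.const_mul (2/45 : ℝ) h5)).add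
      (HasDerivAt.const_mul (2/1575 : ℝ) h7)).sub (HasDerivAt.const_mul (2/99225 : ℝ) h9)
    refine htot.congr_deriv ?_
    push_cast
    ring
  rw [intervalIntegral.integral_eq_sub_of_hasDerivAt hF
    ((by fun_prop : Continuous fun τ : ℝ => 2*τ^2 - 2/9*τ^4 + 2/225*τ^6
      - 2/11025*τ^8).intervalIntegrable _ _)]
  ring

private lemma outer_hi :
    (∫ τ in (0:ℝ)..(π/2), (2*τ^2 - 2/9*τ^4 + 2/225*τ^6 - 2/11025*τ^8 + 2/893025*τ^10))
    = π^3/12 - π^5/720 + π^7/100800 - π^9/25401600 + π^11/10059033600 := by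
  have hF : ∀ τ ∈ Set.uIcc (0:ℝ) (π/2), HasDerivAt
      (fun τ : ℝ => 2/3*τ^3 - 2/45*τ^5 + 2/1575*τ^7 - 2/99225*τ^9 + 2/9823275*τ^11)
      (2*τ^2 - 2/9*τ^4 + 2/225*τ^6 - 2/11025*τ^8 + 2/893025*τ^10) τ := by
    intro τ _
    have h3 := hasDerivAt_pow 3 τ
    have h5 := hasDerivAt_pow 5 τ
    have h7 := hasDerivAt_pow 7 τ
    have h9 := hasDerivAt_pow 9 τ
    have h11 := hasDerivAt_pow 11 τ
    have htot := ((((HasDerivAt.const_mul (2/3 : ℝ) h3).sub (HasDerivAt.const_mul (2/45 : ℝ) h5)).add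
      (HasDerivAt.const_mul (2/1575 : ℝ) h7)).sub (HasDerivAt.const_mul (2/99225 : ℝ) h9)).add
      (HasDerivAt.const_mul (2/9823275 : ℝ) h11)
    refine htot.congr_deriv ?_
    push_cast
    ring
  rw [intervalIntegral.integral_eq_sub_of_hasDerivAt hF
    ((by fun_prop : Continuous fun τ : ℝ => 2*τ^2 - 2/9*τ^4 + 2/225*τ^6 - 2/11025*τ^8
      + 2/893025*τ^10).intervalIntegrable _ _)]
  ring


private lemma Ifun_cont : Continuous fun τ : ℝ => ∫ v in (-(π/2))..(π/2), τ * Real.sin (τ * Real.cos v) :=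
  intervalIntegral.continuous_parametric_intervalIntegral_of_continuous'
    (f := fun τ v => τ * Real.sin (τ * Real.cos v)) (by fun_prop) _ _

private lemma I_lower : π^3/12 - π^5/720 + π^7/100800 - π^9/25401600
    ≤ ∫ τ in (0:ℝ)..(π/2), ∫ v in (-(π/2))..(π/2), τ * Real.sin (τ * Real.cos v) := by
  rw [← outer_lo]
  refine intervalIntegral.integral_mono_on (by positivity)
    ((by fun_prop : Continuous fun τ : ℝ => 2*τ^2 - 2/9*τ^4 + 2/225*τ^6
      - 2/11025*τ^8).intervalIntegrable _ _)
    (Ifun_cont.intervalIntegrable _ _) ?_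
  intro τ hτ
  rw [← inner_lo τ]
  refine intervalIntegral.integral_mono_on (by linarith [Real.pi_pos])
    ((by fun_prop : Continuous fun v : ℝ => τ * ((τ*Real.cos v) - (τ*Real.cos v)^3/6
      + (τ*Real.cos v)^5/120 - (τ*Real.cos v)^7/5040)).intervalIntegrable _ _)
    ((by fun_prop : Continuous fun v : ℝ => τ * Real.sin (τ * Real.cos v)).intervalIntegrable _ _)
    ?_
  intro v hv
  have hx : 0 ≤ τ * Real.cos v := mul_nonneg hτ.1 (Real.cos_nonneg_of_mem_Icc hv)
  exact mul_le_mul_of_nonneg_left (sin_ge_s7 hx) hτ.1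

private lemma I_upper : (∫ τ in (0:ℝ)..(π/2), ∫ v in (-(π/2))..(π/2), τ * Real.sin (τ * Real.cos v))
    ≤ π^3/12 - π^5/720 + π^7/100800 - π^9/25401600 + π^11/10059033600 := by
  rw [← outer_hi]
  refine intervalIntegral.integral_mono_on (by positivity)
    (Ifun_cont.intervalIntegrable _ _)
    ((by fun_prop : Continuous fun τ : ℝ => 2*τ^2 - 2/9*τ^4 + 2/225*τ^6 - 2/11025*τ^8
      + 2/893025*τ^10).intervalIntegrable _ _) ?_
  intro τ hτ
  rw [← inner_hi τ]
  refine intervalIntegral.integral_mono_on (by linarith [Real.pi_pos])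
    ((by fun_prop : Continuous fun v : ℝ => τ * Real.sin (τ * Real.cos v)).intervalIntegrable _ _)
    ((by fun_prop : Continuous fun v : ℝ => τ * ((τ*Real.cos v) - (τ*Real.cos v)^3/6
      + (τ*Real.cos v)^5/120 - (τ*Real.cos v)^7/5040
      + (τ*Real.cos v)^9/362880)).intervalIntegrable _ _) ?_
  intro v hv
  have hx : 0 ≤ τ * Real.cos v := mul_nonneg hτ.1 (Real.cos_nonneg_of_mem_Icc hv)
  exact mul_le_mul_of_nonneg_left (sin_le_s9 hx) hτ.1

private lemma num_lo : 0.6963 * π < π^3/12 - π^5/720 + π^7/100800 - π^9/25401600 := by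
  have h1 : (3.141592:ℝ) < π := Real.pi_gt_d6
  have h2 : π < 3.141593 := Real.pi_lt_d6
  have h3 : (3.141592:ℝ)^3 < π^3 := by gcongr
  have h5 : π^5 < (3.141593:ℝ)^5 := by gcongr
  have h7 : (3.141592:ℝ)^7 < π^7 := by gcongr
  have h9 : π^9 < (3.141593:ℝ)^9 := by gcongr
  nlinarith [h3, h5, h7, h9, h2]

private lemma num_hi : π^3/12 - π^5/720 + π^7/100800 - π^9/25401600 + π^11/10059033600
    < 0.6964 * π := by
  have h1 : (3.141592:ℝ) < π := Real.pi_gt_d6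
  have h2 : π < 3.141593 := Real.pi_lt_d6
  have h3 : π^3 < (3.141593:ℝ)^3 := by gcongr
  have h5 : (3.141592:ℝ)^5 < π^5 := by gcongr
  have h7 : π^7 < (3.141593:ℝ)^7 := by gcongr
  have h9 : (3.141592:ℝ)^9 < π^9 := by gcongr
  have h11 : π^11 < (3.141593:ℝ)^11 := by gcongr
  nlinarith [h3, h5, h7, h9, h11, h1]

/-- The volume of the geodesic ball of radius `ρ` in `S² × ℝ` geometry
(Theorem 2.4 of the paper). -/
noncomputable def ballVol (ρ : ℝ) : ℝ :=
  2 * π * ∫ τ in (0 : ℝ)..ρ, ∫ v in (-(π / 2))..(π / 2), τ * Real.sin (τ * Real.cos v)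

/-- The density `δ(R₃, K₃) ≈ 0.69634983` of the multiply transitive packing with
`R₃ = π/2` and kernel point `K = A₂` (equation (2.11)), the Dirichlet–Voronoi cell
having volume `2π²`. -/
theorem density_R3_bounds :
    0.6963 < ballVol (π / 2) / (2 * π ^ 2) ∧ ballVol (π / 2) / (2 * π ^ 2) < 0.6964 := by
  have hπ := Real.pi_pos
  set I := ∫ τ in (0:ℝ)..(π/2), ∫ v in (-(π/2))..(π/2), τ * Real.sin (τ * Real.cos v) with hI
  have key : ballVol (π / 2) / (2 * π ^ 2) = I / π := by
    simp only [ballVol, ← hI]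
    rw [div_eq_div_iff (by positivity) (by positivity)]
    ring
  have hlo := I_lower
  have hhi := I_upper
  constructor
  · rw [key, lt_div_iff₀ hπ]
    have := num_lo
    linarith
  · rw [key, div_lt_iff₀ hπ]
    have := num_hi
    linarith
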